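/- Let \u03b1\u2081, \u2026, \u03b1\u2088 \u2208 \u2102 be the roots, counted with multiplicity, of h = X\u2078 + 2X\u2077 + 2X\u2076 \u2212 4X\u2074 + 8X\u00b2 + 16X + 16. For n = 2 and for n = 3, the monic polynomial \u220f_{i=1}^{8} (X \u2212 \u03b1\u1d62\u207f) \u2208 \u2102[X] has rational coefficients, and the corresponding polynomial in \u211a[X] is irreducible. -/

import Mathlib

open Polynomial

/-- The Weil 2-polynomial `h = X⁸ + 2X⁷ + 2X⁶ − 4X⁴ + 8X² + 16X + 16`, over `ℂ`. -/
noncomputable def weilH : Polynomial ℂ :=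
  X ^ 8 + 2 * X ^ 7 + 2 * X ^ 6 - 4 * X ^ 4 + 8 * X ^ 2 + 16 * X + 16

noncomputable def Hq : Polynomial ℚ :=
  X ^ 8 + 2 * X ^ 7 + 2 * X ^ 6 - 4 * X ^ 4 + 8 * X ^ 2 + 16 * X + 16

noncomputable def Q2 : Polynomial ℚ :=
  X ^ 8 - 4 * X ^ 6 + 16 * X ^ 4 - 64 * X ^ 2 + 256

noncomputable def Q3 : Polynomial ℚ :=
  X ^ 8 - 4 * X ^ 7 + 8 * X ^ 6 - 64 * X ^ 4 + 512 * X ^ 2 - 2048 * X + 4096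

lemma weilH_monic : weilH.Monic := by unfold weilH; monicity!

lemma weilH_natDegree : weilH.natDegree = 8 := by unfold weilH; compute_degree!

lemma Hq_monic : Hq.Monic := by unfold Hq; monicity!

lemma Hq_natDegree : Hq.natDegree = 8 := by unfold Hq; compute_degree!

lemma Q2_monic : Q2.Monic := by unfold Q2; monicity!

lemma Q2_natDegree : Q2.natDegree = 8 := by unfold Q2; compute_degree!

lemma Q3_monic : Q3.Monic := by unfold Q3; monicity!

lemma weilH_splits : Splits weilH := IsAlgClosed.splits weilH

lemma weilH_eq_prod : weilH = (weilH.roots.map fun a => X - C a).prod :=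
  weilH_splits.eq_prod_roots_of_monic weilH_monic

lemma weilH_card : weilH.roots.card = 8 := by
  rw [splits_iff_card_roots.mp weilH_splits, weilH_natDegree]

lemma weilH_eval (z : ℂ) : weilH.eval z = (weilH.roots.map fun a => z - a).prod := by
  conv_lhs => rw [weilH_eq_prod]
  rw [eval_multiset_prod, Multiset.map_map]
  simp

lemma Hq_map : Hq.map (algebraMap ℚ ℂ) = weilH := by
  simp [Hq, weilH, Polynomial.map_add, Polynomial.map_sub, Polynomial.map_mul,
    Polynomial.map_pow, Polynomial.map_ofNat]

noncomputable def omg : ℂ := (-1 + Real.sqrt 3 * Complex.I) / 2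

lemma omg_rel : omg ^ 2 + omg + 1 = 0 := by
  have h3 : (Real.sqrt 3 : ℂ) ^ 2 = 3 := by
    norm_cast
    rw [Real.sq_sqrt]; norm_num
  have hI : Complex.I ^ 2 = -1 := Complex.I_sq
  unfold omg
  linear_combination (Complex.I ^ 2 / 4) * h3 + (3 / 4 : ℂ) * hI

lemma cube_factor (y a : ℂ) :
    (y - a) * (omg * y - a) * (omg ^ 2 * y - a) = y ^ 3 - a ^ 3 := by
  linear_combination ((omg - 1) * y ^ 3 - a * omg * y ^ 2 + a ^ 2 * y) * omg_rel

lemma eval_L2 (y : ℂ) :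
    ((weilH.roots.map fun a => X - C (a ^ 2)).prod).eval (y ^ 2)
      = weilH.eval y * weilH.eval (-y) := by
  rw [eval_multiset_prod, Multiset.map_map]
  have : (Multiset.map ((fun p => eval (y^2) p) ∘ fun a => X - C (a ^ 2)) weilH.roots)
      = Multiset.map (fun a => ((y - a) * (-y - a)) * (-1)) weilH.roots := by
    apply Multiset.map_congr rfl
    intro a _
    simp only [Function.comp_apply, eval_sub, eval_X, eval_C]
    ring
  rw [this, Multiset.prod_map_mul, Multiset.prod_map_mul]
  rw [Multiset.map_const', Multiset.prod_replicate, weilH_card]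
  rw [weilH_eval y, weilH_eval (-y)]
  ring

lemma eval_L3 (y : ℂ) :
    ((weilH.roots.map fun a => X - C (a ^ 3)).prod).eval (y ^ 3)
      = weilH.eval y * weilH.eval (omg * y) * weilH.eval (omg ^ 2 * y) := by
  rw [eval_multiset_prod, Multiset.map_map]
  have : (Multiset.map ((fun p => eval (y^3) p) ∘ fun a => X - C (a ^ 3)) weilH.roots)
      = Multiset.map (fun a => ((y - a) * (omg * y - a)) * (omg ^ 2 * y - a)) weilH.roots := by
    apply Multiset.map_congr rfl
    intro a _
    simp only [Function.comp_apply, eval_sub, eval_X, eval_C]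
    rw [cube_factor]
  rw [this, Multiset.prod_map_mul, Multiset.prod_map_mul]
  rw [weilH_eval y, weilH_eval (omg * y), weilH_eval (omg ^ 2 * y)]

lemma eval_Q2 (y : ℂ) :
    (Q2.map (algebraMap ℚ ℂ)).eval (y ^ 2) = weilH.eval y * weilH.eval (-y) := by
  simp only [Q2, weilH, Polynomial.map_add, Polynomial.map_sub, Polynomial.map_mul,
    Polynomial.map_pow, Polynomial.map_ofNat, Polynomial.map_X, eval_add, eval_sub,
    eval_mul, eval_pow, eval_ofNat, eval_X, eval_neg]
  ring

lemma eval_Q3 (y : ℂ) :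
    (Q3.map (algebraMap ℚ ℂ)).eval (y ^ 3)
      = weilH.eval y * weilH.eval (omg * y) * weilH.eval (omg ^ 2 * y) := by
  have hw : omg ^ 2 + omg + 1 = 0 := omg_rel
  simp only [Q3, weilH, Polynomial.map_add, Polynomial.map_sub, Polynomial.map_mul,
    Polynomial.map_pow, Polynomial.map_ofNat, Polynomial.map_X, eval_add, eval_sub,
    eval_mul, eval_pow, eval_ofNat, eval_X]
  linear_combination (-((4096:ℂ) * y + (2048:ℂ) * y^2 + (2048:ℂ) * omg * y^2 + (2048:ℂ) * omg^2 * y^2 + (2048:ℂ) * y^3 + (2048:ℂ) * omg^2 * y^3 + (2048:ℂ) * omg^3 * y^3 + (-1024:ℂ) * y^4 + (1024:ℂ) * omg * y^4 + (1024:ℂ) * omg^2 * y^4 + (1024:ℂ) * omg^4 * y^4 + (1024:ℂ) * omg^5 * y^4 + (-1024:ℂ) * omg^6 * y^4 + (-1024:ℂ) * omg * y^5 + (1024:ℂ) * omg^3 * y^5 + (-1024:ℂ) * omg^4 * y^5 + (1024:ℂ) * omg^5 * y^5 + (-1024:ℂ) * omg^7 * y^5 + (-512:ℂ) * omg^2 *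 y^6 + (-512:ℂ) * omg^3 * y^6 + (512:ℂ) * omg^5 * y^6 + (-512:ℂ) * omg^6 * y^6 + (-512:ℂ) * omg^8 * y^6 + (-512:ℂ) * omg^9 * y^6 + (512:ℂ) * omg^10 * y^6 + (512:ℂ) * y^7 + (-512:ℂ) * omg^4 * y^7 + (512:ℂ) * omg^6 * y^7 + (-512:ℂ) * omg^8 * y^7 + (512:ℂ) * omg^12 * y^7 + (256:ℂ) * y^8 + (256:ℂ) * omg * y^8 + (256:ℂ) * omg^2 * y^8 + (256:ℂ) * omg^4 * y^8 + (-256:ℂ) * omg^5 * y^8 + (768:ℂ) * omg^7 * y^8 + (-256:ℂ) * omg^9 * y^8 + (256:ℂ) * omg^10 * y^8 + (256:ℂ) * omg^12 * y^8 + (256:ℂ) * omg^13 * y^8 + (256:ℂ) * omg^14 * y^8 + (256:ℂ) * omg * y^9 + (256:ℂ) * omg^2 * y^9 + (256:ℂ) * omg^4 * y^9 + (256:ℂ) * omg^7 * y^9 + (256:ℂ) * omg^8 * y^9 + (256:ℂ) * omg^9 * y^9 + (256:ℂ) * omg^12 * y^9 + (256:ℂ) * omg^14 * y^9 + (256:ℂ)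 * omg^15 * y^9 + (128:ℂ) * omg^2 * y^10 + (128:ℂ) * omg^3 * y^10 + (128:ℂ) * omg^5 * y^10 + (-128:ℂ) * omg^6 * y^10 + (256:ℂ) * omg^8 * y^10 + (256:ℂ) * omg^10 * y^10 + (-128:ℂ) * omg^12 * y^10 + (128:ℂ) * omg^13 * y^10 + (128:ℂ) * omg^15 * y^10 + (128:ℂ) * omg^16 * y^10 + (128:ℂ) * omg^5 * y^11 + (-128:ℂ) * omg^6 * y^11 + (-128:ℂ) * omg^7 * y^11 + (128:ℂ) * omg^10 * y^11 + (-128:ℂ) * omg^13 * y^11 + (-128:ℂ) * omg^14 * y^11 + (128:ℂ) * omg^15 * y^11 + (64:ℂ) * y^12 + (-64:ℂ) * omg * y^12 + (64:ℂ) * omg^3 * y^12 + (-128:ℂ) * omg^4 * y^12 + (64:ℂ) * omg^5 * y^12 + (64:ℂ) * omg^6 * y^12 + (-128:ℂ) * omg^7 * y^12 + (-128:ℂ) * omg^8 * y^12 + (64:ℂ) * omg^12 * y^12 + (-64:ℂ) * omg^13 * y^12 + (-128:ℂ) * omg^14 * y^12 + (-64:ℂ) * omg^15 * y^12 + (64:ℂ)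 * omg^17 * y^12 + (-64:ℂ) * omg^18 * y^12 + (64:ℂ) * omg^7 * y^13 + (-64:ℂ) * omg^8 * y^13 + (-64:ℂ) * omg^9 * y^13 + (64:ℂ) * omg^12 * y^13 + (-64:ℂ) * omg^15 * y^13 + (-64:ℂ) * omg^16 * y^13 + (64:ℂ) * omg^17 * y^13 + (32:ℂ) * omg^6 * y^14 + (32:ℂ) * omg^7 * y^14 + (32:ℂ) * omg^9 * y^14 + (-32:ℂ) * omg^10 * y^14 + (64:ℂ) * omg^12 * y^14 + (64:ℂ) * omg^14 * y^14 + (-32:ℂ) * omg^16 * y^14 + (32:ℂ) * omg^17 * y^14 + (32:ℂ) * omg^19 * y^14 + (32:ℂ) * omg^20 * y^14 + (32:ℂ) * omg^7 * y^15 + (32:ℂ) * omg^8 * y^15 + (32:ℂ) * omg^10 * y^15 + (32:ℂ) * omg^13 * y^15 + (32:ℂ) * omg^14 * y^15 + (32:ℂ) * omg^15 * y^15 + (32:ℂ) * omg^18 * y^15 + (32:ℂ) * omg^20 * y^15 + (32:ℂ) * omg^21 * y^15 + (16:ℂ) * omg^8 * y^16 + (16:ℂ) * omg^9 * y^16 +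 (16:ℂ) * omg^10 * y^16 + (16:ℂ) * omg^12 * y^16 + (-16:ℂ) * omg^13 * y^16 + (48:ℂ) * omg^15 * y^16 + (-16:ℂ) * omg^17 * y^16 + (16:ℂ) * omg^18 * y^16 + (16:ℂ) * omg^20 * y^16 + (16:ℂ) * omg^21 * y^16 + (16:ℂ) * omg^22 * y^16 + (16:ℂ) * omg^10 * y^17 + (-16:ℂ) * omg^14 * y^17 + (16:ℂ) * omg^16 * y^17 + (-16:ℂ) * omg^18 * y^17 + (16:ℂ) * omg^22 * y^17 + (-8:ℂ) * y^18 + (8:ℂ) * omg * y^18 + (-8:ℂ) * omg^3 * y^18 + (8:ℂ) * omg^4 * y^18 + (-8:ℂ) * omg^6 * y^18 + (8:ℂ) * omg^7 * y^18 + (-8:ℂ) * omg^9 * y^18 + (8:ℂ) * omg^10 * y^18 + (-8:ℂ) * omg^14 * y^18 + (-8:ℂ) * omg^15 * y^18 + (8:ℂ) * omg^17 * y^18 + (-8:ℂ) * omg^18 * y^18 + (-8:ℂ) * omg^20 * y^18 + (-8:ℂ) * omg^21 * y^18 + (8:ℂ) * omg^22 * y^18 + (-8:ℂ) * omg^15 *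 y^19 + (8:ℂ) * omg^17 * y^19 + (-8:ℂ) * omg^18 * y^19 + (8:ℂ) * omg^19 * y^19 + (-8:ℂ) * omg^21 * y^19 + (-4:ℂ) * omg^16 * y^20 + (4:ℂ) * omg^17 * y^20 + (4:ℂ) * omg^18 * y^20 + (4:ℂ) * omg^20 * y^20 + (4:ℂ) * omg^21 * y^20 + (-4:ℂ) * omg^22 * y^20 + (4:ℂ) * y^21 + (-4:ℂ) * omg * y^21 + (4:ℂ) * omg^3 * y^21 + (-4:ℂ) * omg^4 * y^21 + (4:ℂ) * omg^6 * y^21 + (-4:ℂ) * omg^7 * y^21 + (4:ℂ) * omg^9 * y^21 + (-4:ℂ) * omg^10 * y^21 + (4:ℂ) * omg^12 * y^21 + (-4:ℂ) * omg^13 * y^21 + (4:ℂ) * omg^15 * y^21 + (-4:ℂ) * omg^16 * y^21 + (4:ℂ) * omg^18 * y^21 + (4:ℂ) * omg^20 * y^21 + (4:ℂ) * omg^21 * y^21 + (2:ℂ) * omg^20 * y^22 + (2:ℂ) * omg^21 * y^22 + (2:ℂ) * omg^22 * y^22 + (2:ℂ) * omg^22 * y^23 + (-1:ℂ) * y^24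 + (1:ℂ) * omg * y^24 + (-1:ℂ) * omg^3 * y^24 + (1:ℂ) * omg^4 * y^24 + (-1:ℂ) * omg^6 * y^24 + (1:ℂ) * omg^7 * y^24 + (-1:ℂ) * omg^9 * y^24 + (1:ℂ) * omg^10 * y^24 + (-1:ℂ) * omg^12 * y^24 + (1:ℂ) * omg^13 * y^24 + (-1:ℂ) * omg^15 * y^24 + (1:ℂ) * omg^16 * y^24 + (-1:ℂ) * omg^18 * y^24 + (1:ℂ) * omg^19 * y^24 + (-1:ℂ) * omg^21 * y^24 + (1:ℂ) * omg^22 * y^24)) * hw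

lemma L2_eq : (weilH.roots.map fun a => X - C (a ^ 2)).prod = Q2.map (algebraMap ℚ ℂ) := by
  apply Polynomial.funext
  intro x
  obtain ⟨y, rfl⟩ := IsAlgClosed.exists_pow_nat_eq x (n := 2) (by norm_num)
  rw [eval_L2, eval_Q2]

lemma L3_eq : (weilH.roots.map fun a => X - C (a ^ 3)).prod = Q3.map (algebraMap ℚ ℂ) := by
  apply Polynomial.funext
  intro x
  obtain ⟨y, rfl⟩ := IsAlgClosed.exists_pow_nat_eq x (n := 3) (by norm_num)
  rw [eval_L3, eval_Q3]

-- scaling algebra equivalence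
noncomputable def scaleHom (a : ℚ) : Polynomial ℚ →ₐ[ℚ] Polynomial ℚ := aeval (C a * X)

lemma scaleHom_apply (a : ℚ) (p : Polynomial ℚ) : scaleHom a p = p.comp (C a * X) :=
  (comp_eq_aeval).symm

noncomputable def scaleEquiv (a : ℚ) (ha : a ≠ 0) : Polynomial ℚ ≃ₐ[ℚ] Polynomial ℚ :=
  AlgEquiv.ofAlgHom (scaleHom a) (scaleHom a⁻¹)
    (by
      apply Polynomial.algHom_ext
      simp only [scaleHom, AlgHom.coe_comp, Function.comp_apply, aeval_X, map_mul, aeval_C,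
        AlgHom.coe_id, id_eq, Polynomial.algebraMap_eq]
      rw [← mul_assoc, ← C_mul]
      simp [mul_inv_cancel₀ ha, inv_mul_cancel₀ ha])
    (by
      apply Polynomial.algHom_ext
      simp only [scaleHom, AlgHom.coe_comp, Function.comp_apply, aeval_X, map_mul, aeval_C,
        AlgHom.coe_id, id_eq, Polynomial.algebraMap_eq]
      rw [← mul_assoc, ← C_mul]
      simp [mul_inv_cancel₀ ha, inv_mul_cancel₀ ha])

lemma irreducible_scale_mul {p : Polynomial ℚ} (hp : Irreducible p) (a c : ℚ)
    (ha : a ≠ 0) (hc : c ≠ 0) : Irreducible (C c * p.comp (C a * X)) := by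
  have h1 : Irreducible (p.comp (C a * X)) := by
    have := (MulEquiv.irreducible_iff (scaleEquiv a ha).toMulEquiv).mpr hp
    rwa [show ⇑(scaleEquiv a ha).toMulEquiv = ⇑(scaleHom a) from rfl, scaleHom_apply] at this
  have hassoc : Associated (p.comp (C a * X)) (C c * p.comp (C a * X)) :=
    ⟨(isUnit_C.mpr hc.isUnit).unit, by rw [IsUnit.unit_spec, mul_comm]⟩
  exact hassoc.irreducible h1

lemma cyc5 : cyclotomic 5 ℚ = X ^ 4 + X ^ 3 + X ^ 2 + X + 1 := by
  have : Fact (Nat.Prime 5) := ⟨by norm_num⟩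
  rw [cyclotomic_prime]
  rw [Finset.sum_range_succ, Finset.sum_range_succ, Finset.sum_range_succ,
    Finset.sum_range_succ, Finset.sum_range_one]
  ring

lemma cyc10 : cyclotomic 10 ℚ = X ^ 4 - X ^ 3 + X ^ 2 - X + 1 := by
  have h := cyclotomic_expand_eq_cyclotomic_mul (p := 2) (n := 5) (by norm_num) (by norm_num) ℚ
  have hexp : (expand ℚ 2) (X ^ 4 + X ^ 3 + X ^ 2 + X + 1 : Polynomial ℚ)
      = X ^ 8 + X ^ 6 + X ^ 4 + X ^ 2 + 1 := by
    simp [map_add, map_pow, expand_X, map_one]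
    ring
  rw [cyc5, hexp] at h
  norm_num at h
  have hne : (X ^ 4 + X ^ 3 + X ^ 2 + X + 1 : Polynomial ℚ) ≠ 0 := by
    intro hcon
    have := congrArg (eval 1) hcon
    norm_num at this
  apply mul_right_cancel₀ hne
  rw [← h]; ring

lemma cyc20 : cyclotomic 20 ℚ = X ^ 8 - X ^ 6 + X ^ 4 - X ^ 2 + 1 := by
  have h := cyclotomic_expand_eq_cyclotomic (p := 2) (n := 10) (by norm_num) (by norm_num) ℚ
  rw [cyc10] at h
  norm_num at h
  rw [← h]
  simp [map_add, map_sub, map_pow, expand_X, map_one]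
  ring

lemma Q2_scale : Q2 = C 256 * (cyclotomic 20 ℚ).comp (C (1/2) * X) := by
  rw [cyc20]
  apply Polynomial.funext
  intro x
  simp [eval_comp, Q2]
  ring

lemma Q2_irred : Irreducible Q2 := by
  rw [Q2_scale]
  exact irreducible_scale_mul (cyclotomic.irreducible_rat (by norm_num)) _ _ (by norm_num)
    (by norm_num)

open IntermediateField in
lemma minpoly_natDegree_le_of_mem {K L : Type*} [Field K] [Field L] [Algebra K L]
    {x y : L} (hx : IsIntegral K x) (hy : IsIntegral K y) (hmem : x ∈ K⟮y⟯) :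
    (minpoly K x).natDegree ≤ (minpoly K y).natDegree := by
  haveI hfin : FiniteDimensional K K⟮y⟯ := IntermediateField.adjoin.finiteDimensional hy
  rw [← IntermediateField.adjoin.finrank hx, ← IntermediateField.adjoin.finrank hy]
  have hle : K⟮x⟯ ≤ K⟮y⟯ := by
    rw [IntermediateField.adjoin_le_iff]
    intro z hz
    rw [Set.mem_singleton_iff] at hz
    subst hz
    exact hmem
  haveI : Module.Finite K (K⟮y⟯.toSubalgebra.toSubmodule) := hfin
  exact Submodule.finrank_mono
    (show (K⟮x⟯.toSubalgebra.toSubmodule) ≤ (K⟮y⟯.toSubalgebra.toSubmodule) from hle)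

open IntermediateField in
lemma Q2_comp_sq : Q2.comp (X ^ 2) = Hq * Hq.comp (-X) := by
  apply Polynomial.funext
  intro x
  simp [eval_comp, Q2, Hq]
  ring

open IntermediateField in
lemma Hq_irred : Irreducible Hq := by
  -- take a complex root of weilH
  obtain ⟨α, hα⟩ : ∃ α : ℂ, weilH.eval α = 0 := by
    have hdeg : 0 < weilH.degree := by
      rw [← natDegree_pos_iff_degree_pos, weilH_natDegree]
      norm_num
    obtain ⟨α, hα⟩ := Complex.exists_root hdeg
    exact ⟨α, hα⟩
  have haev : aeval α Hq = 0 := by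
    rw [aeval_def, ← eval_map, Hq_map, hα]
  have haevneg : aeval α (Hq.comp (-X)) = 0 ∨ True := Or.inr trivial
  have hint : IsIntegral ℚ α := ⟨Hq, Hq_monic, by rwa [← aeval_def] ⟩
  have hint2 : IsIntegral ℚ (α ^ 2) := hint.pow 2
  -- minpoly of α^2 is Q2
  have haev2 : aeval (α ^ 2) Q2 = 0 := by
    have := congrArg (aeval α) Q2_comp_sq
    rw [aeval_comp, map_mul, haev, zero_mul] at this
    simpa using this
  have hmin2 : minpoly ℚ (α ^ 2) = Q2 :=
    (minpoly.eq_of_irreducible_of_monic Q2_irred haev2 Q2_monic).symm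
  -- degrees
  have hr : 8 ≤ (minpoly ℚ α).natDegree := by
    have hmem : α ^ 2 ∈ IntermediateField.adjoin ℚ {α} :=
      pow_mem (IntermediateField.mem_adjoin_simple_self ℚ α) 2
    have := minpoly_natDegree_le_of_mem hint2 hint hmem
    rwa [hmin2, Q2_natDegree] at this
  -- minpoly divides Hq
  have hdvd : minpoly ℚ α ∣ Hq := minpoly.dvd ℚ α haev
  have hHne : Hq ≠ 0 := Hq_monic.ne_zero
  have hdle : (minpoly ℚ α).natDegree ≤ 8 := by
    rw [← Hq_natDegree]
    exact natDegree_le_of_dvd hdvd hHne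
  have hdeq : (minpoly ℚ α).natDegree = 8 := le_antisymm hdle hr
  obtain ⟨k, hk⟩ := hdvd
  have hmem : (minpoly ℚ α).Monic := minpoly.monic hint
  have hkne : k ≠ 0 := by
    intro hcon; rw [hcon, mul_zero] at hk; exact hHne hk
  have hknd : k.natDegree = 0 := by
    have := congrArg natDegree hk
    rw [natDegree_mul hmem.ne_zero hkne, Hq_natDegree, hdeq] at this
    omega
  have hklc : k.leadingCoeff = 1 := by
    have := congrArg leadingCoeff hk
    rw [leadingCoeff_mul, hmem.leadingCoeff, one_mul, Hq_monic.leadingCoeff] at this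
    exact this.symm
  have hk1 : k = 1 := by
    have hkc : k = C (k.coeff 0) := Polynomial.eq_C_of_natDegree_eq_zero hknd
    have hlc0 : k.leadingCoeff = k.coeff 0 := by rw [Polynomial.leadingCoeff, hknd]
    have h1 : k.coeff 0 = 1 := by rw [← hlc0]; exact hklc
    rw [hkc, h1, map_one]
  rw [hk, hk1, mul_one]
  exact minpoly.irreducible hint

lemma Q3_scale : Q3 = C 256 * Hq.comp (C (-(1/2)) * X) := by
  apply Polynomial.funext
  intro x
  simp [eval_comp, Q3, Hq]
  ring

lemma Q3_irred : Irreducible Q3 := by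
  rw [Q3_scale]
  exact irreducible_scale_mul Hq_irred _ _ (by norm_num) (by norm_num)

theorem stmt5 :
    ∀ n : ℕ, n = 2 ∨ n = 3 →
      ∃ Q : Polynomial ℚ,
        Q.map (algebraMap ℚ ℂ) = (weilH.roots.map (fun α => X - C (α ^ n))).prod ∧
        Irreducible Q := by
  rintro n (rfl | rfl)
  · exact ⟨Q2, L2_eq.symm, Q2_irred⟩
  · exact ⟨Q3, L3_eq.symm, Q3_irred⟩
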